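/- Two elements t^r · ι(u) and t^s · ι(v) of G (with r, s ∈ ℤ and u, v ∈ F) are conjugate in G if and only if r = s and there exists an integer k such that φ^k(u) is φ^r-twisted conjugate to v, i.e. there exist k ∈ ℤ and g ∈ F with v = (φ^r g)⁻¹ · (φ^k u) · g. -/

import Mathlib

/-- `u` and `v` are `φ`-twisted conjugate: there is `g` with `v = (φ g)⁻¹ * u * g`. -/
def TwistedConj {F : Type*} [Group F] (φ : MulAut F) (u v : F) : Prop :=
  ∃ g : F, v = (φ g)⁻¹ * u * g

/-- In the [f.g. free]-by-(infinite cyclic) group `G`, the elements `t^r * ι u` and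
`t^s * ι v` are conjugate iff `r = s` and `φ^k u` is `φ^r`-twisted conjugate to `v`
for some integer `k`. -/
theorem isConj_iff_twistedConj {α : Type*} {G : Type*} [Group G]
    (φ : MulAut (FreeGroup α)) (ι : FreeGroup α →* G) (hι : Function.Injective ι)
    (t : G) (ht : ∀ w : FreeGroup α, t⁻¹ * ι w * t = ι (φ w))
    (hgen : Subgroup.closure (Set.range ι ∪ {t}) = ⊤)
    (htor : ∀ k : ℤ, t ^ k ∈ Set.range ι → k = 0)
    (r s : ℤ) (u v : FreeGroup α) :
    IsConj (t ^ r * ι u) (t ^ s * ι v) ↔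
      r = s ∧ ∃ k : ℤ, TwistedConj (φ ^ r) ((φ ^ k) u) v := by
  -- basic commutation relations
  have h1 : ∀ w : FreeGroup α, ι w * t = t * ι (φ w) := by
    intro w; rw [← ht w]; group
  have h2 : ∀ w : FreeGroup α, ι w * t⁻¹ = t⁻¹ * ι (φ⁻¹ w) := by
    intro w
    have := ht (φ⁻¹ w)
    rw [show φ (φ⁻¹ w) = w from φ.apply_symm_apply w] at this
    rw [← this]; group
  have hcomm : ∀ (m : ℤ) (w : FreeGroup α), ι w * t ^ m = t ^ m * ι ((φ ^ m) w) := by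
    intro m
    induction m using Int.induction_on with
    | zero => simp
    | succ n ih =>
      intro w
      have key : (φ ^ ((n : ℤ) + 1)) w = φ ((φ ^ (n : ℤ)) w) := by
        rw [add_comm, zpow_one_add]; rfl
      calc ι w * t ^ ((n : ℤ) + 1) = (ι w * t ^ (n : ℤ)) * t := by
            rw [zpow_add, zpow_one, mul_assoc]
        _ = t ^ (n : ℤ) * (ι ((φ ^ (n : ℤ)) w) * t) := by rw [ih, mul_assoc]
        _ = t ^ ((n : ℤ) + 1) * ι ((φ ^ ((n : ℤ) + 1)) w) := by
            rw [h1, zpow_add, zpow_one, mul_assoc, key]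
    | pred n ih =>
      intro w
      have key : (φ ^ (-(n : ℤ) - 1)) w = φ⁻¹ ((φ ^ (-(n : ℤ))) w) := by
        rw [show -(n : ℤ) - 1 = -1 + -(n : ℤ) by ring, zpow_add, zpow_neg_one]; rfl
      calc ι w * t ^ (-(n : ℤ) - 1) = (ι w * t ^ (-(n : ℤ))) * t⁻¹ := by
            rw [sub_eq_add_neg, zpow_add, zpow_neg_one, mul_assoc]
        _ = t ^ (-(n : ℤ)) * (ι ((φ ^ (-(n : ℤ))) w) * t⁻¹) := by rw [ih, mul_assoc]
        _ = t ^ (-(n : ℤ) - 1) * ι ((φ ^ (-(n : ℤ) - 1)) w) := by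
            rw [key, h2, sub_eq_add_neg, zpow_add, zpow_neg_one, mul_assoc]
  -- multiplication of normal forms
  have hmul : ∀ (a b : ℤ) (x y : FreeGroup α),
      (t ^ a * ι x) * (t ^ b * ι y) = t ^ (a + b) * ι ((φ ^ b) x * y) := by
    intro a b x y
    rw [map_mul, zpow_add]
    calc (t ^ a * ι x) * (t ^ b * ι y) = t ^ a * (ι x * t ^ b) * ι y := by group
      _ = t ^ a * (t ^ b * ι ((φ ^ b) x)) * ι y := by rw [hcomm]
      _ = t ^ a * t ^ b * (ι ((φ ^ b) x) * ι y) := by group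
  -- uniqueness of normal forms
  have heq : ∀ (a b : ℤ) (x y : FreeGroup α),
      t ^ a * ι x = t ^ b * ι y → a = b ∧ x = y := by
    intro a b x y h
    have h3 : t ^ (a - b) = ι (y * x⁻¹) := by
      have : t ^ a = t ^ b * ι y * (ι x)⁻¹ := eq_mul_inv_iff_mul_eq.mpr h
      rw [show a - b = -b + a by ring, zpow_add, this, map_mul, map_inv]
      group
    have hab : a - b = 0 := htor _ ⟨_, h3.symm⟩
    have hab' : a = b := by omega
    subst hab'
    refine ⟨rfl, hι ?_⟩
    exact mul_left_cancel h
  -- every element of G has a normal form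
  have hsurj : ∀ x : G, ∃ (k : ℤ) (g : FreeGroup α), x = t ^ k * ι g := by
    intro x
    have hx : x ∈ (⊤ : Subgroup G) := trivial
    rw [← hgen] at hx
    refine Subgroup.closure_induction ?_ ⟨0, 1, by simp⟩ ?_ ?_ hx
    · rintro y (⟨w, rfl⟩ | rfl)
      · exact ⟨0, w, by simp⟩
      · exact ⟨1, 1, by simp⟩
    · rintro a b - - ⟨k, g, rfl⟩ ⟨m, h, rfl⟩
      exact ⟨k + m, (φ ^ m) g * h, hmul k m g h⟩
    · rintro a - ⟨k, g, rfl⟩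
      refine ⟨-k, (φ ^ (-k)) g⁻¹, ?_⟩
      have h4 : (t ^ k * ι g) * (t ^ (-k) * ι ((φ ^ (-k)) g⁻¹)) = 1 := by
        rw [hmul, ← map_mul]; simp
      exact inv_eq_of_mul_eq_one_right h4
  rw [isConj_iff]
  constructor
  · rintro ⟨c, hc⟩
    obtain ⟨k, g, rfl⟩ := hsurj c
    have hc' : (t ^ k * ι g) * (t ^ r * ι u) = (t ^ s * ι v) * (t ^ k * ι g) := by
      rw [← hc]; group
    rw [hmul, hmul] at hc'
    obtain ⟨hk, hw⟩ := heq _ _ _ _ hc'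
    have hrs : r = s := by omega
    subst hrs
    refine ⟨rfl, -k, (φ ^ (-k)) g⁻¹, ?_⟩
    -- from hw : (φ ^ r) g * u = (φ ^ k) v * g
    have hv : v = (φ ^ (-k)) ((φ ^ r) g * u * g⁻¹) := by
      have : (φ ^ k) v = (φ ^ r) g * u * g⁻¹ := by
        rw [hw]; group
      calc v = (φ ^ (-k)) ((φ ^ k) v) := by
            rw [← MulAut.mul_apply, ← zpow_add]; simp
        _ = (φ ^ (-k)) ((φ ^ r) g * u * g⁻¹) := by rw [this]
    rw [hv]
    simp only [map_mul, map_inv, ← MulAut.mul_apply, ← zpow_add, inv_inv]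
    rw [show r + -k = -k + r by ring]
  · rintro ⟨rfl, k, g, hg⟩
    refine ⟨(t ^ k * ι g)⁻¹, ?_⟩
    rw [inv_inv]
    have key : (t ^ r * ι u) * (t ^ k * ι g) = (t ^ k * ι g) * (t ^ r * ι v) := by
      rw [hmul, hmul, add_comm r k]
      congr 2
      rw [hg]
      group
    rw [mul_assoc, key]; group
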